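/- Assume ℕA is scored with respect to the finite family Φ. Let a ∈ ℤ^d satisfy φ(a) ≤ 0 for all φ ∈ Φ and −a ∉ ℕA. Then there exist φ ∈ Φ and a natural number K such that for all integers k ≥ K one has n_φ(k·a) < k·n_φ(a), where n_φ(x) := #{m ∈ φ(ℕA) : m + φ(x) ∉ φ(ℕA)}. -/

import Mathlib

/-!
Scored setting: `a₁,…,a_n ∈ ℤ^d` generate `ℤ^d` as a group, `ℕA` is the submonoid they
generate, and `Φ` is a finite set of surjective group homomorphisms `φ : ℤ^d → ℤ` with
`φ(aᵢ) ≥ 0` (facet functionals). `ℕA` is scored w.r.t. `Φ` if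
`ℕA = {x : φ(x) ∈ φ(ℕA) for all φ ∈ Φ}`. For `x ∈ ℤ^d` set
`n_φ(x) = #{m ∈ φ(ℕA) : m + φ(x) ∉ φ(ℕA)}`.
-/

/-- The submonoid `ℕA` of `ℤ^d` generated by `a₁,…,a_n`. -/
def NA {d n : ℕ} (a : Fin n → Fin d → ℤ) : AddSubmonoid (Fin d → ℤ) :=
  AddSubmonoid.closure (Set.range a)

/-- `n_φ(x) = #{m ∈ φ(ℕA) : m + φ(x) ∉ φ(ℕA)}`. -/
noncomputable def nphi {d n : ℕ} (a : Fin n → Fin d → ℤ)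
    (φ : (Fin d → ℤ) →+ ℤ) (x : Fin d → ℤ) : ℕ :=
  {m : ℤ | m ∈ φ '' (NA a : Set (Fin d → ℤ)) ∧
      m + φ x ∉ φ '' (NA a : Set (Fin d → ℤ))}.ncard

section Aux

/-- Nonnegative multiples stay in an additively closed set. -/
lemma aux_nsmul (S : Set ℤ) (h0 : (0:ℤ) ∈ S)
    (hadd : ∀ p ∈ S, ∀ q ∈ S, p + q ∈ S) :
    ∀ (n : ℕ) (s : ℤ), s ∈ S → (n : ℤ) * s ∈ S := by
  intro n s hs
  induction n with
  | zero => simpa using h0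
  | succ n ih =>
      push_cast
      rw [add_mul, one_mul]
      exact hadd _ ih _ hs

/-- A submonoid of ℤ contained in ℕ which contains two consecutive elements
is cofinite in ℕ. -/
lemma aux_cofinite (S : Set ℤ) (h0 : (0:ℤ) ∈ S)
    (hadd : ∀ p ∈ S, ∀ q ∈ S, p + q ∈ S)
    (hpos : ∀ m ∈ S, 0 ≤ m)
    (hgen : ∃ p ∈ S, ∃ q ∈ S, p - q = 1) :
    ∃ N : ℤ, 0 ≤ N ∧ ∀ m : ℤ, N ≤ m → m ∈ S := by
  obtain ⟨p, hp, q, hq, hpq⟩ := hgen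
  have hq0 : 0 ≤ q := hpos q hq
  refine ⟨q * q, mul_self_nonneg q, ?_⟩
  intro m hm
  rcases eq_or_lt_of_le hq0 with hq1 | hq1
  · -- q = 0, so p = 1 ∈ S
    have hp1 : p = 1 := by omega
    have hm0 : 0 ≤ m := by nlinarith
    have := aux_nsmul S h0 hadd m.toNat p hp
    rw [Int.toNat_of_nonneg hm0, hp1, mul_one] at this
    exact this
  · -- q ≥ 1
    set r : ℤ := m % q with hr
    set c : ℤ := m / q with hc
    have hr0 : 0 ≤ r := Int.emod_nonneg m (by omega)
    have hrq : r < q := Int.emod_lt_of_pos m hq1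
    have hcq : q ≤ c := (Int.le_ediv_iff_mul_le hq1).mpr hm
    have hmem1 : ((c - r).toNat : ℤ) * q ∈ S := aux_nsmul S h0 hadd _ q hq
    have hmem2 : ((r.toNat : ℤ)) * p ∈ S := aux_nsmul S h0 hadd _ p hp
    have hsum : ((c - r).toNat : ℤ) * q + (r.toNat : ℤ) * p ∈ S := hadd _ hmem1 _ hmem2
    have h1 : ((c - r).toNat : ℤ) = c - r := Int.toNat_of_nonneg (by omega)
    have h2 : ((r.toNat : ℤ)) = r := Int.toNat_of_nonneg hr0
    have hme : q * c + r = m := Int.mul_ediv_add_emod m q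
    have : ((c - r).toNat : ℤ) * q + (r.toNat : ℤ) * p = m := by
      rw [h1, h2]
      linear_combination hme + r * hpq
    rwa [this] at hsum

/-- For `T` beyond all gaps, the count `n(T)` equals `T`. -/
lemma aux_count_big (S : Set ℤ) (hpos : ∀ m ∈ S, 0 ≤ m) (N : ℤ) (hN0 : 0 ≤ N)
    (hN : ∀ m : ℤ, N ≤ m → m ∈ S) (T : ℤ) (hT : N ≤ T) :
    {m : ℤ | m ∈ S ∧ m - T ∉ S}.ncard = T.toNat := by
  set Gaps : Set ℤ := {g : ℤ | 0 ≤ g ∧ g ∉ S} with hGaps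
  have hGsub : Gaps ⊆ Set.Ico 0 N := by
    rintro g ⟨hg0, hg⟩
    refine ⟨hg0, ?_⟩
    by_contra h
    exact hg (hN g (by omega))
  have hGfin : Gaps.Finite := (Set.finite_Ico 0 N).subset hGsub
  have hB : {m : ℤ | m ∈ S ∧ m - T ∉ S}
      = (S ∩ Set.Ico 0 T) ∪ ((· + T) '' Gaps) := by
    ext m
    constructor
    · rintro ⟨hmS, hm⟩
      have hm0 : 0 ≤ m := hpos m hmS
      by_cases hlt : m < T
      · exact Or.inl ⟨hmS, hm0, hlt⟩
      · exact Or.inr ⟨m - T, ⟨by omega, hm⟩, by ring⟩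
    · rintro (⟨hmS, _, hlt⟩ | ⟨g, ⟨hg0, hg⟩, heq⟩)
      · exact ⟨hmS, fun h => by have := hpos _ h; omega⟩
      · have heq' : g + T = m := heq
        refine ⟨?_, ?_⟩
        · rw [← heq']; exact hN _ (by omega)
        · rw [← heq']; simpa using hg
  have hfin1 : (S ∩ Set.Ico 0 T).Finite :=
    (Set.finite_Ico 0 T).subset Set.inter_subset_right
  have hfin2 : ((· + T) '' Gaps).Finite := hGfin.image _
  have hdisj : Disjoint (S ∩ Set.Ico 0 T) ((· + T) '' Gaps) := by
    rw [Set.disjoint_left]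
    rintro m ⟨_, _, hlt⟩ ⟨g, ⟨hg0, _⟩, heq⟩
    have heq' : g + T = m := heq
    omega
  have hIco : Set.Ico (0:ℤ) T = (S ∩ Set.Ico 0 T) ∪ Gaps := by
    ext m
    constructor
    · rintro ⟨h0, hlt⟩
      by_cases hmS : m ∈ S
      · exact Or.inl ⟨hmS, h0, hlt⟩
      · exact Or.inr ⟨h0, hmS⟩
    · rintro (⟨_, h⟩ | hg)
      · exact h
      · obtain ⟨h1, h2⟩ := hGsub hg; exact ⟨h1, by omega⟩
  have hdisj2 : Disjoint (S ∩ Set.Ico 0 T) Gaps := by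
    rw [Set.disjoint_left]
    rintro m ⟨hmS, _⟩ ⟨_, hm⟩
    exact hm hmS
  have hIcoCard : (Set.Ico (0:ℤ) T).ncard = T.toNat := by
    rw [show Set.Ico (0:ℤ) T = (Finset.Ico (0:ℤ) T : Finset ℤ) by simp,
      Set.ncard_coe_finset, Int.card_Ico]
    simp
  have h1 : (Set.Ico (0:ℤ) T).ncard = (S ∩ Set.Ico 0 T).ncard + Gaps.ncard := by
    have h1' := Set.ncard_union_eq hdisj2 hfin1 hGfin
    rw [← hIco] at h1'
    exact h1'
  rw [hB, Set.ncard_union_eq hdisj hfin1 hfin2,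
    Set.ncard_image_of_injective _ (add_left_injective T)]
  omega

/-- For a gap `t`, the count `n(t)` is at least `t + 1`. -/
lemma aux_count_gap (S : Set ℤ) (h0 : (0:ℤ) ∈ S) (hpos : ∀ m ∈ S, 0 ≤ m)
    (N : ℤ) (hN0 : 0 ≤ N) (hN : ∀ m : ℤ, N ≤ m → m ∈ S)
    (t : ℤ) (ht0 : 0 ≤ t) (ht : t ∉ S) :
    t.toNat + 1 ≤ {m : ℤ | m ∈ S ∧ m - t ∉ S}.ncard := by
  set Gaps : Set ℤ := {g : ℤ | 0 ≤ g ∧ g ∉ S} with hGaps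
  have hGsub : Gaps ⊆ Set.Ico 0 N := by
    rintro g ⟨hg0, hg⟩
    refine ⟨hg0, ?_⟩
    by_contra h
    exact hg (hN g (by omega))
  have hGfin : Gaps.Finite := (Set.finite_Ico 0 N).subset hGsub
  have htG : t ∈ Gaps := ⟨ht0, ht⟩
  set GLT : Set ℤ := Gaps ∩ Set.Ico 0 t with hGLT
  set C : Set ℤ := {g ∈ Gaps | g + t ∈ S} with hC
  set D : Set ℤ := {g ∈ Gaps | g + t ∉ S} with hD
  set Rest : Set ℤ := Gaps \ (insert t GLT) with hRest
  have hGLTfin : GLT.Finite := hGfin.subset Set.inter_subset_left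
  have hCfin : C.Finite := hGfin.subset (fun g hg => hg.1)
  have hDfin : D.Finite := hGfin.subset (fun g hg => hg.1)
  have hRestfin : Rest.Finite := hGfin.subset Set.diff_subset
  have hSfin : (S ∩ Set.Ico 0 t).Finite :=
    (Set.finite_Ico 0 t).subset Set.inter_subset_right
  -- the counted set contains the disjoint union of `S ∩ [0,t)` and `C + t`
  have hBsup : (S ∩ Set.Ico 0 t) ∪ ((· + t) '' C) ⊆ {m : ℤ | m ∈ S ∧ m - t ∉ S} := by
    rintro m (⟨hmS, _, hlt⟩ | ⟨g, ⟨⟨hg0, hg⟩, hgt⟩, heq⟩)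
    · exact ⟨hmS, fun h => by have := hpos _ h; omega⟩
    · have heq' : g + t = m := heq
      rw [← heq']
      exact ⟨hgt, by simpa using hg⟩
  have hBfin : ({m : ℤ | m ∈ S ∧ m - t ∉ S}).Finite := by
    apply (Set.finite_Ico 0 (N + t)).subset
    rintro m ⟨hmS, hm⟩
    have h1 : 0 ≤ m := hpos m hmS
    have h2 : m - t < N := by
      by_contra h
      exact hm (hN _ (by omega))
    exact ⟨h1, by omega⟩
  have hdisj : Disjoint (S ∩ Set.Ico 0 t) ((· + t) '' C) := by
    rw [Set.disjoint_left]
    rintro m ⟨_, _, hlt⟩ ⟨g, ⟨⟨hg0, _⟩, _⟩, heq⟩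
    have heq' : g + t = m := heq
    omega
  have hstep1 : (S ∩ Set.Ico 0 t).ncard + C.ncard ≤ {m : ℤ | m ∈ S ∧ m - t ∉ S}.ncard := by
    rw [← Set.ncard_image_of_injective C (add_left_injective t),
      ← Set.ncard_union_eq hdisj hSfin (hCfin.image _)]
    exact Set.ncard_le_ncard hBsup hBfin
  -- `[0,t) = (S ∩ [0,t)) ⊔ GLT`
  have hIco : Set.Ico (0:ℤ) t = (S ∩ Set.Ico 0 t) ∪ GLT := by
    ext m
    constructor
    · rintro ⟨hm0, hlt⟩
      by_cases hmS : m ∈ S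
      · exact Or.inl ⟨hmS, hm0, hlt⟩
      · exact Or.inr ⟨⟨hm0, hmS⟩, hm0, hlt⟩
    · rintro (⟨_, h⟩ | ⟨_, h⟩) <;> exact h
  have hdisj2 : Disjoint (S ∩ Set.Ico 0 t) GLT := by
    rw [Set.disjoint_left]
    rintro m ⟨hmS, _⟩ ⟨⟨_, hm⟩, _⟩
    exact hm hmS
  have hIcoCard : (Set.Ico (0:ℤ) t).ncard = t.toNat := by
    rw [show Set.Ico (0:ℤ) t = (Finset.Ico (0:ℤ) t : Finset ℤ) by simp,
      Set.ncard_coe_finset, Int.card_Ico]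
    simp
  have hstep2 : t.toNat = (S ∩ Set.Ico 0 t).ncard + GLT.ncard := by
    have h1' := Set.ncard_union_eq hdisj2 hSfin hGLTfin
    rw [← hIco] at h1'
    rw [← hIcoCard, h1']
  -- `Gaps = C ⊔ D`
  have hCD : Gaps = C ∪ D := by
    ext g
    constructor
    · intro hg
      by_cases h : g + t ∈ S
      · exact Or.inl ⟨hg, h⟩
      · exact Or.inr ⟨hg, h⟩
    · rintro (⟨h, _⟩ | ⟨h, _⟩) <;> exact h
  have hdisjCD : Disjoint C D := by
    rw [Set.disjoint_left]
    rintro g ⟨_, h1⟩ ⟨_, h2⟩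
    exact h2 h1
  have hstep3 : Gaps.ncard = C.ncard + D.ncard := by
    rw [hCD, Set.ncard_union_eq hdisjCD hCfin hDfin]
  -- `Gaps = GLT ⊔ {t} ⊔ Rest`
  have hGdecomp : Gaps = insert t GLT ∪ Rest := by
    ext g
    constructor
    · intro hg
      by_cases h : g ∈ insert t GLT
      · exact Or.inl h
      · exact Or.inr ⟨hg, h⟩
    · rintro (h | ⟨h, _⟩)
      · rcases h with rfl | ⟨h, _⟩
        · exact htG
        · exact h
      · exact h
  have hdisj3 : Disjoint (insert t GLT) Rest := by
    rw [Set.disjoint_left]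
    rintro g hg ⟨_, hg2⟩
    exact hg2 hg
  have htnot : t ∉ GLT := by
    rintro ⟨_, _, h⟩
    omega
  have hstep4 : Gaps.ncard = GLT.ncard + 1 + Rest.ncard := by
    rw [hGdecomp, Set.ncard_union_eq hdisj3 (hGLTfin.insert t) hRestfin,
      Set.ncard_insert_of_notMem htnot hGLTfin]
  -- `D` injects into `Rest` via `g ↦ g + t`
  have hstep5 : D.ncard ≤ Rest.ncard := by
    rw [← Set.ncard_image_of_injective D (add_left_injective t)]
    apply Set.ncard_le_ncard _ hRestfin
    rintro m ⟨g, ⟨⟨hg0, hg⟩, hgt⟩, heq⟩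
    have heq' : g + t = m := heq
    have hgne : g ≠ 0 := by rintro rfl; exact hg h0
    refine ⟨⟨by omega, by rw [← heq']; exact hgt⟩, ?_⟩
    rintro (h | ⟨_, _, h⟩) <;> omega
  omega

end Aux

/-- Assume `ℕA` is scored w.r.t. `Φ`. If `x ∈ ℤ^d` satisfies
`φ(x) ≤ 0` for all `φ ∈ Φ` and `−x ∉ ℕA`, then there are `φ ∈ Φ` and `K : ℕ` such
that `n_φ(k·x) < k·n_φ(x)` for all `k ≥ K`. -/
theorem exists_facet_strict_count {d n : ℕ} (hd : 0 < d) (hn : 0 < n)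
    (a : Fin n → Fin d → ℤ) (hgen : AddSubgroup.closure (Set.range a) = ⊤)
    (Φ : Finset ((Fin d → ℤ) →+ ℤ))
    (hsurj : ∀ φ ∈ Φ, Function.Surjective φ)
    (hnonneg : ∀ φ ∈ Φ, ∀ i, 0 ≤ φ (a i))
    (hscored : (NA a : Set (Fin d → ℤ)) =
      {x | ∀ φ ∈ Φ, φ x ∈ φ '' (NA a : Set (Fin d → ℤ))})
    (x : Fin d → ℤ) (hx1 : ∀ φ ∈ Φ, φ x ≤ 0) (hx2 : -x ∉ NA a) :
    ∃ φ ∈ Φ, ∃ K : ℕ, ∀ k : ℕ, K ≤ k → nphi a φ (k • x) < k * nphi a φ x := by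
  -- extract a facet functional witnessing `-x ∉ ℕA`
  have hx2' : -x ∉ {y : Fin d → ℤ | ∀ φ ∈ Φ, φ y ∈ φ '' (NA a : Set (Fin d → ℤ))} := by
    rw [← hscored]; exact hx2
  simp only [Set.mem_setOf_eq] at hx2'
  push_neg at hx2'
  obtain ⟨φ, hφΦ, hφ⟩ := hx2'
  set S : Set ℤ := φ '' (NA a : Set (Fin d → ℤ)) with hSdef
  -- basic properties of S
  have h0 : (0:ℤ) ∈ S := ⟨0, (NA a).zero_mem, map_zero φ⟩
  have hadd : ∀ p ∈ S, ∀ q ∈ S, p + q ∈ S := by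
    rintro p ⟨u, hu, rfl⟩ q ⟨v, hv, rfl⟩
    exact ⟨u + v, (NA a).add_mem hu hv, map_add φ u v⟩
  have hpos : ∀ m ∈ S, 0 ≤ m := by
    rintro m ⟨v, hv, rfl⟩
    induction hv using AddSubmonoid.closure_induction with
    | mem y hy =>
        obtain ⟨i, rfl⟩ := hy
        exact hnonneg φ hφΦ i
    | zero => simp
    | add y z _ _ hy hz => rw [map_add]; exact add_nonneg hy hz
  -- `S` generates ℤ as a group, hence contains consecutive elements
  have hgen1 : ∃ p ∈ S, ∃ q ∈ S, p - q = 1 := by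
    have htop : AddSubgroup.closure S = ⊤ := by
      rw [eq_top_iff]
      calc (⊤ : AddSubgroup ℤ) = AddSubgroup.map φ ⊤ :=
            (AddSubgroup.map_top_of_surjective φ (hsurj φ hφΦ)).symm
        _ = AddSubgroup.map φ (AddSubgroup.closure (Set.range a)) := by rw [hgen]
        _ = AddSubgroup.closure (φ '' Set.range a) := AddMonoidHom.map_closure φ _
        _ ≤ AddSubgroup.closure S := by
            apply AddSubgroup.closure_mono
            rintro m ⟨v, hv, rfl⟩
            exact ⟨v, AddSubmonoid.subset_closure hv, rfl⟩
    set G : AddSubgroup ℤ :=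
      { carrier := {z : ℤ | ∃ p ∈ S, ∃ q ∈ S, p - q = z}
        zero_mem' := ⟨0, h0, 0, h0, by ring⟩
        add_mem' := by
          rintro z w ⟨p1, hp1, q1, hq1, rfl⟩ ⟨p2, hp2, q2, hq2, rfl⟩
          exact ⟨p1 + p2, hadd _ hp1 _ hp2, q1 + q2, hadd _ hq1 _ hq2, by ring⟩
        neg_mem' := by
          rintro z ⟨p, hp, q, hq, rfl⟩
          exact ⟨q, hq, p, hp, by ring⟩ } with hG
    have hSG : AddSubgroup.closure S ≤ G := by
      rw [AddSubgroup.closure_le]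
      intro s hs
      exact ⟨s, hs, 0, h0, by ring⟩
    have : (1:ℤ) ∈ G := hSG (htop ▸ AddSubgroup.mem_top 1)
    exact this
  obtain ⟨N, hN0, hN⟩ := aux_cofinite S h0 hadd hpos hgen1
  -- the gap value
  set t : ℤ := -(φ x) with htdef
  have ht0 : 0 ≤ t := by have := hx1 φ hφΦ; omega
  have ht : t ∉ S := by
    intro h
    apply hφ
    rwa [map_neg, ← htdef]
  have ht1 : 1 ≤ t := by
    rcases eq_or_lt_of_le ht0 with h | h
    · exact absurd (h ▸ h0) ht
    · omega
  refine ⟨φ, hφΦ, max N.toNat 1, ?_⟩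
  intro k hk
  have hk1 : 1 ≤ k := le_trans (le_max_right _ _) hk
  have hkN : (N.toNat : ℤ) ≤ (k : ℤ) := by
    exact_mod_cast le_trans (le_max_left _ _) hk
  -- value of nphi at k • x
  have hkt : N ≤ (k : ℤ) * t := by
    have h1 : N ≤ (k : ℤ) := le_trans (Int.self_le_toNat N) hkN
    nlinarith
  have hφk : φ (k • x) = -((k : ℤ) * t) := by
    rw [map_nsmul, nsmul_eq_mul]
    simp [htdef]
  have hset1 : {m : ℤ | m ∈ S ∧ m + φ (k • x) ∉ S} = {m : ℤ | m ∈ S ∧ m - (k : ℤ) * t ∉ S} := by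
    rw [hφk]
    ext m
    simp [sub_eq_add_neg]
  have e1 : nphi a φ (k • x) = ((k : ℤ) * t).toNat := by
    show {m : ℤ | m ∈ S ∧ m + φ (k • x) ∉ S}.ncard = ((k : ℤ) * t).toNat
    rw [hset1]
    exact aux_count_big S hpos N hN0 hN _ hkt
  have e1' : ((k : ℤ) * t).toNat = k * t.toNat := by
    rw [show (k : ℤ) * t = ((k * t.toNat : ℕ) : ℤ) by
      push_cast [Int.toNat_of_nonneg ht0]; ring, Int.toNat_natCast]
  -- lower bound on nphi at x
  have hset2 : {m : ℤ | m ∈ S ∧ m + φ x ∉ S} = {m : ℤ | m ∈ S ∧ m - t ∉ S} := by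
    rw [show φ x = -t by simp [htdef]]
    ext m
    simp [sub_eq_add_neg]
  have e2 : t.toNat + 1 ≤ nphi a φ x := by
    show t.toNat + 1 ≤ {m : ℤ | m ∈ S ∧ m + φ x ∉ S}.ncard
    rw [hset2]
    exact aux_count_gap S h0 hpos N hN0 hN t ht0 ht
  have hfinal : k * (t.toNat + 1) ≤ k * nphi a φ x := Nat.mul_le_mul_left k e2
  rw [e1, e1']
  calc k * t.toNat < k * t.toNat + k := by omega
    _ = k * (t.toNat + 1) := by ring
    _ ≤ k * nphi a φ x := hfinal
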